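/- Let Y* ∈ ℝ^{r × dn} with rank(Y*) = d and suppose (Y*)ᵀY* = (R*)ᵀR* where R* ∈ ℝ^{d × dn} has blocks R*_i ∈ SO(d). If Y* = U_d Ξ_d V_dᵀ is a rank-d thin SVD and Ȳ = Ξ_d V_dᵀ ∈ ℝ^{d × dn}, then each d × d block Ȳ_i of Ȳ is an orthogonal matrix, and there exists A ∈ O(d) with Ȳ = A R*. -/

import Mathlib

open Matrix

def SOd (d : ℕ) (R : Matrix (Fin d) (Fin d) ℝ) : Prop :=
  Rᵀ * R = 1 ∧ R.det = 1

def blockConcat {r d n : ℕ} (Y : Fin n → Matrix (Fin r) (Fin d) ℝ) :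
    Matrix (Fin r) (Fin n × Fin d) ℝ :=
  Matrix.of fun a p => Y p.1 a p.2

lemma real_transpose_mul_self_eq_zero {m n : Type*} [Fintype m] {A : Matrix m n ℝ}
    (h : Aᵀ * A = 0) : A = 0 := by
  have hH : Aᴴ = Aᵀ := by ext i j; simp [Matrix.conjTranspose_apply]
  exact Matrix.conjTranspose_mul_self_eq_zero.mp (by rw [hH]; exact h)

/-- if `Y*` has rank `d`, `(Y*)ᵀY* = (R*)ᵀR*` with
`R* ∈ SO(d)^n`, and `Y* = U Ξ Vᵀ` is a rank-`d` thin SVD, then with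
`Ȳ = Ξ Vᵀ`, each `d × d` block of `Ȳ` is orthogonal, and `Ȳ = A R*` for some
`A ∈ O(d)`. -/
theorem stmt13 {r d n : ℕ} (hd : 1 ≤ d)
    (Ystar : Matrix (Fin r) (Fin n × Fin d) ℝ) (hrank : Ystar.rank = d)
    (U : Matrix (Fin r) (Fin d) ℝ) (hU : Uᵀ * U = 1)
    (Xi : Matrix (Fin d) (Fin d) ℝ)
    (hXidiag : ∀ i j : Fin d, i ≠ j → Xi i j = 0)
    (hXipos : ∀ i : Fin d, 0 < Xi i i)
    (V : Matrix (Fin n × Fin d) (Fin d) ℝ) (hV : Vᵀ * V = 1)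
    (hSVD : Ystar = U * Xi * Vᵀ)
    (Rstar : Fin n → Matrix (Fin d) (Fin d) ℝ) (hRstar : ∀ i, SOd d (Rstar i))
    (hfac : Ystarᵀ * Ystar = (blockConcat Rstar)ᵀ * blockConcat Rstar) :
    (∀ i : Fin n,
      (Matrix.of fun a b : Fin d => (Xi * Vᵀ) a (i, b))ᵀ *
          (Matrix.of fun a b : Fin d => (Xi * Vᵀ) a (i, b)) =
        (1 : Matrix (Fin d) (Fin d) ℝ)) ∧
    ∃ A : Matrix (Fin d) (Fin d) ℝ, Aᵀ * A = 1 ∧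
      Xi * Vᵀ = A * blockConcat Rstar := by
  have hn : 0 < n := by
    rcases Nat.eq_zero_or_pos n with h0 | h
    · exfalso
      have h1 := Ystar.rank_le_card_width
      rw [hrank] at h1
      simp [h0] at h1
      omega
    · exact h
  have hnR : (n : ℝ) ≠ 0 := Nat.cast_ne_zero.mpr hn.ne'
  set Yb := Xi * Vᵀ with hYb
  set Rb := blockConcat Rstar with hRb
  set G := Rbᵀ * Rb with hGdef
  -- Gram matrices agree
  have hG : Ybᵀ * Yb = G := by
    rw [← hfac, hSVD, hYb]
    rw [Matrix.transpose_mul, Matrix.transpose_mul, Matrix.transpose_mul]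
    calc Vᵀᵀ * Xiᵀ * (Xi * Vᵀ)
        = Vᵀᵀ * Xiᵀ * ((1 : Matrix (Fin d) (Fin d) ℝ) * (Xi * Vᵀ)) := by
          rw [Matrix.one_mul]
      _ = Vᵀᵀ * Xiᵀ * (Uᵀ * U * (Xi * Vᵀ)) := by rw [hU]
      _ = Vᵀᵀ * (Xiᵀ * Uᵀ) * (U * Xi * Vᵀ) := by simp only [Matrix.mul_assoc]
  have hR2 : ∀ i, Rstar i * (Rstar i)ᵀ = 1 := fun i =>
    mul_eq_one_comm.mp (hRstar i).1
  have hRR : Rb * Rbᵀ = (n : ℝ) • (1 : Matrix (Fin d) (Fin d) ℝ) := by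
    ext a b
    have key : ∀ i : Fin n, ∑ c : Fin d, Rstar i a c * Rstar i b c
        = (1 : Matrix (Fin d) (Fin d) ℝ) a b := by
      intro i
      rw [← hR2 i]
      simp [Matrix.mul_apply, Matrix.transpose_apply]
    simp only [Matrix.mul_apply, Matrix.transpose_apply, hRb, blockConcat,
      Matrix.of_apply, Fintype.sum_prod_type, key, Finset.sum_const,
      Finset.card_univ, Fintype.card_fin, nsmul_eq_mul, Matrix.smul_apply,
      smul_eq_mul]
  have hGsym : Gᵀ = G := by
    rw [hGdef, Matrix.transpose_mul, Matrix.transpose_transpose]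
  have hGG : G * G = (n : ℝ) • G := by
    calc G * G = Rbᵀ * (Rb * Rbᵀ) * Rb := by
          rw [hGdef]; simp only [Matrix.mul_assoc]
      _ = Rbᵀ * ((n : ℝ) • (1 : Matrix (Fin d) (Fin d) ℝ)) * Rb := by rw [hRR]
      _ = (n : ℝ) • G := by
          rw [Matrix.mul_smul, Matrix.mul_one, Matrix.smul_mul, hGdef]
  set A : Matrix (Fin d) (Fin d) ℝ := (n : ℝ)⁻¹ • (Yb * Rbᵀ) with hA
  have hAtA : Aᵀ * A = 1 := by
    rw [hA, Matrix.transpose_smul, Matrix.transpose_mul, Matrix.transpose_transpose,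
      Matrix.smul_mul, Matrix.mul_smul, smul_smul]
    have e : Rb * Ybᵀ * (Yb * Rbᵀ) = Rb * Rbᵀ * (Rb * Rbᵀ) := by
      calc Rb * Ybᵀ * (Yb * Rbᵀ) = Rb * (Ybᵀ * Yb) * Rbᵀ := by
            simp only [Matrix.mul_assoc]
        _ = Rb * (Rbᵀ * Rb) * Rbᵀ := by rw [hG, hGdef]
        _ = Rb * Rbᵀ * (Rb * Rbᵀ) := by simp only [Matrix.mul_assoc]
    rw [e, hRR]
    simp only [Matrix.smul_mul, Matrix.mul_smul, Matrix.one_mul, smul_smul]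
    match_scalars
    field_simp
  -- Yb = A * Rb
  have hARb : A * Rb = (n : ℝ)⁻¹ • (Yb * G) := by
    rw [hA, Matrix.smul_mul, Matrix.mul_assoc, hGdef]
  have hYAR : Yb = A * Rb := by
    have h1 : Ybᵀ * (Yb * G) = (n : ℝ) • G := by
      rw [← Matrix.mul_assoc, hG, hGG]
    have h2 : (Yb * G)ᵀ * Yb = (n : ℝ) • G := by
      rw [Matrix.transpose_mul, hGsym, Matrix.mul_assoc, hG, hGG]
    have h3 : (Yb * G)ᵀ * (Yb * G) = ((n : ℝ) * (n : ℝ)) • G := by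
      rw [Matrix.transpose_mul, hGsym, Matrix.mul_assoc]
      rw [← Matrix.mul_assoc Ybᵀ Yb G, hG, hGG, Matrix.mul_smul, hGG, smul_smul]
    have c1 : (n : ℝ)⁻¹ • ((n : ℝ) • G) = G := by
      rw [smul_smul, inv_mul_cancel₀ hnR, one_smul]
    have c2 : (n : ℝ)⁻¹ • (n : ℝ)⁻¹ • (((n : ℝ) * (n : ℝ)) • G) = G := by
      rw [smul_smul, smul_smul]
      match_scalars
      field_simp
    have hD : (Yb - A * Rb)ᵀ * (Yb - A * Rb) = 0 := by
      rw [hARb]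
      simp only [Matrix.transpose_sub, Matrix.sub_mul, Matrix.mul_sub,
        Matrix.transpose_smul, Matrix.smul_mul, Matrix.mul_smul, h1, h2, h3,
        hG, smul_sub, smul_smul]
      match_scalars <;> field_simp <;> ring
    exact sub_eq_zero.mp (real_transpose_mul_self_eq_zero hD)
  -- blocks
  have hblock : ∀ i : Fin n,
      (Matrix.of fun a b : Fin d => Yb a (i, b)) = A * Rstar i := by
    intro i
    ext a b
    rw [hYAR]
    simp [Matrix.mul_apply, hRb, blockConcat]
  refine ⟨fun i => ?_, A, hAtA, hYAR⟩
  rw [show (Matrix.of fun a b : Fin d => (Xi * Vᵀ) a (i, b))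
      = (Matrix.of fun a b : Fin d => Yb a (i, b)) from rfl, hblock i,
    Matrix.transpose_mul]
  calc (Rstar i)ᵀ * Aᵀ * (A * Rstar i)
      = (Rstar i)ᵀ * (Aᵀ * A) * Rstar i := by simp only [Matrix.mul_assoc]
    _ = 1 := by rw [hAtA, Matrix.mul_one, (hRstar i).1]
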